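/- Let R be a ring, A a uniform right R-module, E an indecomposable injective right R-module, and E' an injective right R-module containing A as an essential submodule (an injective hull of A). If A admits an injective R-linear map into a product of copies of E, then E' admits an injective R-linear map into a product of copies of E; consequently, for every right R-module M, if Hom(M,E') ≠ 0 then Hom(M,E) ≠ 0. -/

import Mathlib

open MulOpposite

universe u

/-- A module is indecomposable if it is nonzero and is not the internal direct sum of
two nonzero submodules. -/
def IsIndecomposable (R M : Type*) [Ring R] [AddCommGroup M] [Module R M] : Prop :=
  (∃ x : M, x ≠ 0) ∧
    ∀ A B : Submodule R M, A ⊓ B = ⊥ → A ⊔ B = ⊤ → A = ⊥ ∨ B = ⊥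

/-- A submodule is essential if it meets every nonzero submodule nontrivially. -/
def IsEssentialSubmodule {R M : Type*} [Ring R] [AddCommGroup M] [Module R M]
    (A : Submodule R M) : Prop :=
  ∀ N : Submodule R M, N ≠ ⊥ → N ⊓ A ≠ ⊥

theorem stmt1 {R : Type u} [Ring R]
    {E : Type u} [AddCommGroup E] [Module Rᵐᵒᵖ E]
    (hEind : IsIndecomposable Rᵐᵒᵖ E) (hEinj : Module.Injective Rᵐᵒᵖ E)
    {E' : Type u} [AddCommGroup E'] [Module Rᵐᵒᵖ E'] (hE'inj : Module.Injective Rᵐᵒᵖ E')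
    (A : Submodule Rᵐᵒᵖ E')
    -- `A` is a uniform module:
    (hAne : A ≠ ⊥)
    (hAuniform : ∀ B C : Submodule Rᵐᵒᵖ E', B ≠ ⊥ → C ≠ ⊥ → B ≤ A → C ≤ A → B ⊓ C ≠ ⊥)
    -- `A` is essential in `E'`, i.e. `E'` is an injective hull of `A`:
    (hAess : IsEssentialSubmodule A)
    -- `A` embeds in a product of copies of `E`:
    (hembed : ∃ (ι : Type u) (g : A →ₗ[Rᵐᵒᵖ] (ι → E)), Function.Injective g) :
    (∃ (ι : Type u) (g : E' →ₗ[Rᵐᵒᵖ] (ι → E)), Function.Injective g) ∧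
      ∀ (M : Type u) [AddCommGroup M] [Module Rᵐᵒᵖ M],
        (∃ φ : M →ₗ[Rᵐᵒᵖ] E', φ ≠ 0) → (∃ ψ : M →ₗ[Rᵐᵒᵖ] E, ψ ≠ 0) := by
  obtain ⟨ι, g, hg⟩ := hembed
  choose F hF using fun i : ι =>
    hEinj.out A.subtype Subtype.val_injective ((LinearMap.proj i).comp g)
  set G : E' →ₗ[Rᵐᵒᵖ] (ι → E) := LinearMap.pi F with hG
  have hGA : ∀ a : A, G a = g a := by
    intro a
    funext i
    exact hF i a
  have hGker : LinearMap.ker G = ⊥ := by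
    by_contra h
    obtain ⟨a, ⟨haK, haA⟩, ha0⟩ := Submodule.exists_mem_ne_zero_of_ne_bot (hAess _ h)
    have : g ⟨a, haA⟩ = 0 := by rw [← hGA ⟨a, haA⟩]; exact haK
    have hz : g ⟨a, haA⟩ = g 0 := by simpa using this
    exact ha0 (congrArg Subtype.val (hg hz))
  have hGinj : Function.Injective G := LinearMap.ker_eq_bot.mp hGker
  refine ⟨⟨ι, G, hGinj⟩, ?_⟩
  intro M _ _ ⟨φ, hφ⟩
  obtain ⟨m, hm⟩ : ∃ m, φ m ≠ 0 := by
    by_contra h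
    push_neg at h
    exact hφ (LinearMap.ext fun m => h m)
  have : G (φ m) ≠ 0 := fun h => hm (hGinj (by simpa using h))
  obtain ⟨i, hi⟩ : ∃ i, G (φ m) i ≠ 0 := by
    by_contra h; push_neg at h; exact this (funext h)
  exact ⟨(F i).comp φ, fun h => hi (by simpa [hG] using congrArg (fun ψ => ψ m) h)⟩
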